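/- arXiv:2305.07554 — 5 statements merged into one kernel-verified Lean document; each statement's English description precedes it below -/
import Mathlib

section
/- Interior loss at 0: for fixed positive reals p_1, …, p_n (n ≥ 0), the function x ↦ L°(p_1, …, p_n, x) tends to 0 as x tends to 0 from the right. -/
open Finset

/-- The total loss of a finite family of reals:
`L(p_1, …, p_n) = Σ_i p_i log(1/p_i) − (Σ_i p_i) log(1/Σ_i p_i)`. -/
noncomputable def totalLoss {ι : Type*} (s : Finset ι) (p : ι → ℝ) : ℝ :=
  ∑ i ∈ s, p i * Real.log (1 / p i) - (∑ i ∈ s, p i) * Real.log (1 / ∑ i ∈ s, p i)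

/-- The interior loss, defined by inclusion–exclusion:
`L°(p_1, …, p_n) = Σ_{S ⊆ {1,…,n}} (−1)^{n−|S|} L((p_i)_{i∈S})`. -/
noncomputable def interiorLoss {ι : Type*} [DecidableEq ι] (s : Finset ι) (p : ι → ℝ) : ℝ :=
  ∑ T ∈ s.powerset, (-1 : ℝ) ^ (s.card - T.card) * totalLoss T p

lemma snoc_ne_last {n : ℕ} (p : Fin n → ℝ) {i : Fin (n + 1)} (h : i ≠ Fin.last n)
    (x y : ℝ) : (Fin.snoc p x : Fin (n+1) → ℝ) i = (Fin.snoc p y : Fin (n+1) → ℝ) i := by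
  obtain ⟨j, rfl⟩ := Fin.exists_castSucc_eq.mpr h
  simp [Fin.snoc_castSucc]

lemma continuous_snoc_apply {n : ℕ} (p : Fin n → ℝ) (i : Fin (n + 1)) :
    Continuous (fun x : ℝ => (Fin.snoc p x : Fin (n+1) → ℝ) i) := by
  rcases eq_or_ne i (Fin.last n) with rfl | h
  · simpa [Fin.snoc_last] using continuous_id'
  · have : (fun x : ℝ => (Fin.snoc p x : Fin (n+1) → ℝ) i) = fun _ => (Fin.snoc p 0 : Fin (n+1) → ℝ) i := by
      funext x; exact snoc_ne_last p h x 0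
    rw [this]; exact continuous_const

lemma continuous_totalLoss_snoc {n : ℕ} (p : Fin n → ℝ) (T : Finset (Fin (n + 1))) :
    Continuous (fun x : ℝ => totalLoss T (Fin.snoc p x)) := by
  have key : ∀ t : ℝ, t * Real.log (1 / t) = -(t * Real.log t) := by
    intro t; rw [one_div, Real.log_inv]; ring
  have hsum : Continuous (fun x : ℝ => ∑ i ∈ T, Fin.snoc p x i) :=
    continuous_finset_sum _ fun i _ => continuous_snoc_apply p i
  unfold totalLoss
  simp only [key]
  exact ((continuous_finset_sum _ fun i _ =>
      (Real.continuous_mul_log.comp (continuous_snoc_apply p i)).neg)).sub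
    (Real.continuous_mul_log.comp hsum).neg

lemma totalLoss_insert_zero {ι : Type*} [DecidableEq ι] (q : ι → ℝ) (a : ι) (T : Finset ι)
    (ha : a ∉ T) (hq : q a = 0) : totalLoss (insert a T) q = totalLoss T q := by
  simp [totalLoss, Finset.sum_insert ha, hq]

lemma interiorLoss_snoc_zero {n : ℕ} (p : Fin n → ℝ) :
    interiorLoss Finset.univ (Fin.snoc p (0 : ℝ)) = 0 := by
  classical
  unfold interiorLoss
  have huniv : (univ : Finset (Fin (n + 1))) =
      insert (Fin.last n) (univ.map Fin.castSuccEmb) := by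
    rw [Fin.univ_castSuccEmb]; simp [Finset.cons_eq_insert]
  have hlast : Fin.last n ∉ (univ.map Fin.castSuccEmb : Finset (Fin (n + 1))) := by
    simp [Fin.castSuccEmb]
    intro j h
    exact absurd h (Fin.castSucc_lt_last j).ne
  rw [huniv, Finset.sum_powerset_insert hlast]
  have hcardu : (insert (Fin.last n) (univ.map Fin.castSuccEmb)).card = n + 1 := by
    rw [Finset.card_insert_of_notMem hlast]; simp
  rw [← Finset.sum_add_distrib]
  apply Finset.sum_eq_zero
  intro T hT
  rw [Finset.mem_powerset] at hT
  have haT : Fin.last n ∉ T := fun h => hlast (hT h)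
  have hcard : T.card ≤ n := by
    have := Finset.card_le_card hT
    simpa using this
  rw [totalLoss_insert_zero _ _ _ haT (by simp [Fin.snoc_last]),
    Finset.card_insert_of_notMem haT, hcardu]
  have h1 : n + 1 - T.card = (n - T.card) + 1 := by omega
  have h2 : n + 1 - (T.card + 1) = n - T.card := by omega
  rw [h1, h2, pow_succ]
  ring

/-- interior loss at 0.  For fixed positive reals `p_1, …, p_n` (n ≥ 0),
`x ↦ L°(p_1, …, p_n, x)` tends to 0 as `x → 0⁺`. -/
theorem interiorLoss_tendsto_zero {n : ℕ} (p : Fin n → ℝ) (hp : ∀ i, 0 < p i) :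
    Filter.Tendsto (fun x : ℝ => interiorLoss Finset.univ (Fin.snoc p x))
      (nhdsWithin 0 (Set.Ioi 0)) (nhds 0) := by
  have hcont : Continuous (fun x : ℝ => interiorLoss Finset.univ (Fin.snoc p x)) := by
    unfold interiorLoss
    exact continuous_finset_sum _ fun T _ =>
      continuous_const.mul (continuous_totalLoss_snoc p T)
  have := (hcont.tendsto 0).mono_left (nhdsWithin_le_nhds (s := Set.Ioi (0:ℝ)))
  simpa [interiorLoss_snoc_zero p] using this
end

section
/- Intrinsic sign of logarithmic atoms: for any positive reals p_1, …, p_n with n ≥ 2, (−1)^n L°(p_1, …, p_n) ≥ 0; that is, the sign of the interior loss depends only on the parity of the number of arguments. -/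
set_option linter.unusedSectionVars false

open Finset

section Aux

variable {ι : Type*} [DecidableEq ι]

/-- Sum of `p` over a finset. -/
noncomputable def pS (p : ι → ℝ) (T : Finset ι) : ℝ := ∑ i ∈ T, p i

lemma pS_nonneg {p : ι → ℝ} {s T : Finset ι} (hp : ∀ i ∈ s, 0 ≤ p i) (hT : T ⊆ s) :
    0 ≤ pS p T :=
  Finset.sum_nonneg fun i hi => hp i (hT hi)

lemma monotoneOn_aux {F D : ℝ → ℝ} (hd : ∀ y ∈ Set.Ioi (0:ℝ), HasDerivAt F (D y) y)
    (hD : ∀ y ∈ Set.Ioi (0:ℝ), 0 ≤ D y) : MonotoneOn F (Set.Ioi 0) := by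
  apply monotoneOn_of_deriv_nonneg (convex_Ioi 0)
  · exact fun y hy => (hd y hy).differentiableAt.continuousAt.continuousWithinAt
  · rw [interior_Ioi]
    exact fun y hy => (hd y hy).differentiableAt.differentiableWithinAt
  · intro y hy
    rw [interior_Ioi] at hy
    rw [(hd y hy).deriv]
    exact hD y hy

lemma antitoneOn_aux {F D : ℝ → ℝ} (hd : ∀ y ∈ Set.Ioi (0:ℝ), HasDerivAt F (D y) y)
    (hD : ∀ y ∈ Set.Ioi (0:ℝ), D y ≤ 0) : AntitoneOn F (Set.Ioi 0) := by
  apply antitoneOn_of_deriv_nonpos (convex_Ioi 0)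
  · exact fun y hy => (hd y hy).differentiableAt.continuousAt.continuousWithinAt
  · rw [interior_Ioi]
    exact fun y hy => (hd y hy).differentiableAt.differentiableWithinAt
  · intro y hy
    rw [interior_Ioi] at hy
    rw [(hd y hy).deriv]
    exact hD y hy

/-- Core lemma: alternating sums of inverse powers are nonnegative. -/
lemma core (p : ι → ℝ) :
    ∀ s : Finset ι, (∀ i ∈ s, 0 ≤ p i) → ∀ (m : ℕ) (x : ℝ), 0 < x →
      0 ≤ ∑ T ∈ s.powerset, (-1:ℝ)^T.card * (x + pS p T) ^ (-((m:ℤ)+1)) := by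
  intro s
  induction s using Finset.induction_on with
  | empty =>
    intro _ m x hx
    simp only [powerset_empty, sum_singleton, card_empty, pow_zero, one_mul, pS,
      Finset.sum_empty, add_zero]
    exact zpow_nonneg hx.le _
  | @insert a t ha ih =>
    intro hp m x hx
    have hpa : 0 ≤ p a := hp a (mem_insert_self a t)
    have hpt : ∀ i ∈ t, 0 ≤ p i := fun i hi => hp i (mem_insert_of_mem hi)
    rw [Finset.sum_powerset_insert ha]
    set F : ℝ → ℝ := fun y => ∑ T ∈ t.powerset, (-1:ℝ)^T.card * (y + pS p T) ^ (-((m:ℤ)+1))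
      with hF
    have h2 : ∑ T ∈ t.powerset, (-1:ℝ)^(insert a T).card
          * (x + pS p (insert a T)) ^ (-((m:ℤ)+1)) = -F (x + p a) := by
      rw [hF]
      rw [← neg_eq_iff_eq_neg, ← Finset.sum_neg_distrib]
      apply Finset.sum_congr rfl
      intro T hT
      have haT : a ∉ T := fun h => ha (mem_powerset.mp hT h)
      rw [card_insert_of_notMem haT, pS, Finset.sum_insert haT]
      have hx' : x + (p a + ∑ i ∈ T, p i) = (x + p a) + pS p T := by rw [pS]; ring
      rw [hx', pow_succ]
      ring
    rw [h2]
    have hanti : AntitoneOn F (Set.Ioi 0) := by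
      apply antitoneOn_aux (D := fun y =>
        ∑ T ∈ t.powerset, (-1:ℝ)^T.card
          * (((-((m:ℤ)+1) : ℤ) : ℝ) * (y + pS p T) ^ ((-((m:ℤ)+1)) - 1)))
      · intro y hy
        apply HasDerivAt.fun_sum
        intro T hT
        have h0 : (0:ℝ) < y + pS p T :=
          add_pos_of_pos_of_nonneg hy (pS_nonneg hpt (mem_powerset.mp hT))
        have h1 : HasDerivAt (fun y : ℝ => y + pS p T) 1 y := (hasDerivAt_id y).add_const _
        have h2' := (hasDerivAt_zpow (-((m:ℤ)+1)) (y + pS p T) (Or.inl h0.ne')).comp y h1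
        simpa using h2'.const_mul ((-1:ℝ)^T.card)
      · intro y hy
        have key := ih hpt (m+1) y hy
        have hexp : (-((m:ℤ)+1)) - 1 = -(((m+1:ℕ):ℤ)+1) := by push_cast; ring
        calc ∑ T ∈ t.powerset, (-1:ℝ)^T.card
              * (((-((m:ℤ)+1) : ℤ) : ℝ) * (y + pS p T) ^ ((-((m:ℤ)+1)) - 1))
            = (((-((m:ℤ)+1) : ℤ) : ℝ)) * ∑ T ∈ t.powerset,
                (-1:ℝ)^T.card * (y + pS p T) ^ (-(((m+1:ℕ):ℤ)+1)) := by
              rw [Finset.mul_sum]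
              refine Finset.sum_congr rfl fun T _ => ?_
              rw [hexp]
              ring
          _ ≤ 0 := mul_nonpos_of_nonpos_of_nonneg (by push_cast; linarith) key
    have hmem1 : x ∈ Set.Ioi (0:ℝ) := hx
    have hmem2 : x + p a ∈ Set.Ioi (0:ℝ) := add_pos_of_pos_of_nonneg hx hpa
    have := hanti hmem1 hmem2 (le_add_of_nonneg_right hpa)
    linarith




lemma decomp (p : ι → ℝ) (g : ℝ → ℝ) {s : Finset ι} {a : ι} (haS : a ∈ s) :
    ∑ T ∈ s.powerset, (-1:ℝ)^T.card * g (pS p T)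
      = (∑ T ∈ (s.erase a).powerset, (-1:ℝ)^T.card * g (pS p T))
        - ∑ T ∈ (s.erase a).powerset, (-1:ℝ)^T.card * g (p a + pS p T) := by
  have key := Finset.sum_powerset_insert (notMem_erase a s)
    (fun T => (-1:ℝ)^T.card * g (pS p T))
  rw [insert_erase haS] at key
  rw [key, sub_eq_add_neg, ← Finset.sum_neg_distrib]
  congr 1
  apply Finset.sum_congr rfl
  intro T hT
  have haT : a ∉ T := fun h => (notMem_erase a s) (mem_powerset.mp hT h)
  rw [card_insert_of_notMem haT, pow_succ]
  have : pS p (insert a T) = p a + pS p T := by rw [pS, pS, Finset.sum_insert haT]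
  rw [this]
  ring

lemma slog_mono (p : ι → ℝ) (t : Finset ι) (hpt : ∀ i ∈ t, 0 ≤ p i) :
    MonotoneOn (fun x => ∑ T ∈ t.powerset, (-1:ℝ)^T.card * Real.log (x + pS p T))
      (Set.Ioi 0) := by
  apply monotoneOn_aux
    (D := fun y => ∑ T ∈ t.powerset, (-1:ℝ)^T.card * ((y + pS p T)⁻¹ * 1))
  · intro y hy
    apply HasDerivAt.fun_sum
    intro T hT
    have h0 : (0:ℝ) < y + pS p T :=
      add_pos_of_pos_of_nonneg hy (pS_nonneg hpt (mem_powerset.mp hT))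
    have h1 : HasDerivAt (fun y : ℝ => y + pS p T) 1 y := (hasDerivAt_id y).add_const _
    exact ((Real.hasDerivAt_log h0.ne').comp y h1).const_mul _
  · intro y hy
    have key := core p t hpt 0 y hy
    have e : ∑ T ∈ t.powerset, (-1:ℝ)^T.card * ((y + pS p T)⁻¹ * 1)
        = ∑ T ∈ t.powerset, (-1:ℝ)^T.card * (y + pS p T) ^ (-(((0:ℕ):ℤ)+1)) := by
      apply Finset.sum_congr rfl
      intro T hT
      rw [mul_one]
      congr 1
      rw [show (-(((0:ℕ):ℤ)+1)) = -1 by norm_num, zpow_neg_one]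
    rw [e]
    exact key

lemma slog_nonpos (p : ι → ℝ) {s : Finset ι} (hp : ∀ i ∈ s, 0 ≤ p i) (hs : s.Nonempty)
    {x : ℝ} (hx : 0 < x) :
    ∑ T ∈ s.powerset, (-1:ℝ)^T.card * Real.log (x + pS p T) ≤ 0 := by
  obtain ⟨a, haS⟩ := hs
  have hpa : 0 ≤ p a := hp a haS
  have hpt : ∀ i ∈ s.erase a, 0 ≤ p i := fun i hi => hp i (mem_of_mem_erase hi)
  rw [decomp p (fun z => Real.log (x + z)) haS]
  have e : ∑ T ∈ (s.erase a).powerset, (-1:ℝ)^T.card * Real.log (x + (p a + pS p T))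
      = ∑ T ∈ (s.erase a).powerset, (-1:ℝ)^T.card * Real.log ((x + p a) + pS p T) := by
    apply Finset.sum_congr rfl
    intro T _
    rw [← add_assoc]
  rw [e]
  have hmono := slog_mono p (s.erase a) hpt (Set.mem_Ioi.mpr hx)
    (Set.mem_Ioi.mpr (add_pos_of_pos_of_nonneg hx hpa)) (le_add_of_nonneg_right hpa)
  simpa using sub_nonpos.mpr hmono

lemma sf_anti (p : ι → ℝ) {s : Finset ι} (hp : ∀ i ∈ s, 0 ≤ p i) (hs : s.Nonempty) :
    AntitoneOn (fun x => ∑ T ∈ s.powerset,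
      (-1:ℝ)^T.card * ((x + pS p T) * Real.log (x + pS p T))) (Set.Ioi 0) := by
  apply antitoneOn_aux
    (D := fun y => ∑ T ∈ s.powerset, (-1:ℝ)^T.card * (Real.log (y + pS p T) + 1))
  · intro y hy
    apply HasDerivAt.fun_sum
    intro T hT
    have h0 : (0:ℝ) < y + pS p T :=
      add_pos_of_pos_of_nonneg hy (pS_nonneg hp (mem_powerset.mp hT))
    have h1 : HasDerivAt (fun y : ℝ => y + pS p T) 1 y := (hasDerivAt_id y).add_const _
    have hlog : HasDerivAt (fun y : ℝ => Real.log (y + pS p T)) ((y + pS p T)⁻¹ * 1) y :=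
      by have := (Real.hasDerivAt_log h0.ne').comp y h1; exact this
    have hmul := h1.mul hlog
    have e : 1 * Real.log (y + pS p T) + (y + pS p T) * ((y + pS p T)⁻¹ * 1)
        = Real.log (y + pS p T) + 1 := by
      field_simp
    rw [e] at hmul
    exact hmul.const_mul _
  · intro y hy
    have hsplit : ∑ T ∈ s.powerset, (-1:ℝ)^T.card * (Real.log (y + pS p T) + 1)
        = (∑ T ∈ s.powerset, (-1:ℝ)^T.card * Real.log (y + pS p T))
          + ∑ T ∈ s.powerset, (-1:ℝ)^T.card := by
      rw [← Finset.sum_add_distrib]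
      apply Finset.sum_congr rfl
      intro T _
      ring
    have hz : ∑ T ∈ s.powerset, (-1:ℝ)^T.card = 0 := by
      have h := Finset.sum_powerset_neg_one_pow_card_of_nonempty hs
      exact_mod_cast h
    rw [hsplit, hz, add_zero]
    exact slog_nonpos p hp hs hy

lemma sf_nonneg_pos (p : ι → ℝ) {s : Finset ι} (hp : ∀ i ∈ s, 0 ≤ p i) (h2 : 2 ≤ s.card)
    {x : ℝ} (hx : 0 < x) :
    0 ≤ ∑ T ∈ s.powerset, (-1:ℝ)^T.card * ((x + pS p T) * Real.log (x + pS p T)) := by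
  obtain ⟨a, haS⟩ := Finset.card_pos.mp (by omega : 0 < s.card)
  have hpa : 0 ≤ p a := hp a haS
  have hpt : ∀ i ∈ s.erase a, 0 ≤ p i := fun i hi => hp i (mem_of_mem_erase hi)
  have hne : (s.erase a).Nonempty := by
    rw [← Finset.card_pos, Finset.card_erase_of_mem haS]
    omega
  rw [decomp p (fun z => (x + z) * Real.log (x + z)) haS]
  have e : ∑ T ∈ (s.erase a).powerset,
        (-1:ℝ)^T.card * ((x + (p a + pS p T)) * Real.log (x + (p a + pS p T)))
      = ∑ T ∈ (s.erase a).powerset,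
        (-1:ℝ)^T.card * (((x + p a) + pS p T) * Real.log ((x + p a) + pS p T)) := by
    apply Finset.sum_congr rfl
    intro T _
    rw [← add_assoc]
  rw [e]
  have hanti := sf_anti p hpt hne (Set.mem_Ioi.mpr hx)
    (Set.mem_Ioi.mpr (add_pos_of_pos_of_nonneg hx hpa)) (le_add_of_nonneg_right hpa)
  simpa using sub_nonneg.mpr hanti

lemma sf_nonneg_zero (p : ι → ℝ) {s : Finset ι} (hp : ∀ i ∈ s, 0 ≤ p i) (h2 : 2 ≤ s.card) :
    0 ≤ ∑ T ∈ s.powerset, (-1:ℝ)^T.card * (pS p T * Real.log (pS p T)) := by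
  set G : ℝ → ℝ := fun x => ∑ T ∈ s.powerset,
    (-1:ℝ)^T.card * ((x + pS p T) * Real.log (x + pS p T)) with hG
  have hcont : Continuous G := by
    apply continuous_finset_sum
    intro T _
    exact continuous_const.mul (Real.continuous_mul_log.comp (continuous_id.add continuous_const))
  have hG0 : G 0 = ∑ T ∈ s.powerset, (-1:ℝ)^T.card * (pS p T * Real.log (pS p T)) := by
    rw [hG]
    simp only [zero_add]
  have h : 0 ≤ G 0 := by
    refine ge_of_tendsto (x := nhdsWithin 0 (Set.Ioi (0:ℝ)))
      ((hcont.continuousAt).tendsto.mono_left nhdsWithin_le_nhds) ?_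
    filter_upwards [self_mem_nhdsWithin] with x hx
    exact sf_nonneg_pos p hp h2 hx
  rw [hG0] at h
  exact h

lemma linzero (s : Finset ι) (h2 : 2 ≤ s.card) (c : ι → ℝ) :
    ∑ T ∈ s.powerset, (-1:ℝ)^T.card * ∑ i ∈ T, c i = 0 := by
  have step1 : ∀ T ∈ s.powerset, (-1:ℝ)^T.card * ∑ i ∈ T, c i
      = ∑ i ∈ s, (-1:ℝ)^T.card * (if i ∈ T then c i else 0) := by
    intro T hT
    rw [← Finset.mul_sum]
    congr 1
    rw [Finset.sum_ite_mem, Finset.inter_eq_right.mpr (mem_powerset.mp hT)]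
  rw [Finset.sum_congr rfl step1, Finset.sum_comm]
  apply Finset.sum_eq_zero
  intro i hi
  have key := Finset.sum_powerset_insert (notMem_erase i s)
    (fun T => (-1:ℝ)^T.card * (if i ∈ T then c i else 0))
  rw [insert_erase hi] at key
  rw [key]
  have e1 : ∑ T ∈ (s.erase i).powerset, (-1:ℝ)^T.card * (if i ∈ T then c i else 0) = 0 := by
    apply Finset.sum_eq_zero
    intro T hT
    have hiT : i ∉ T := fun h => (notMem_erase i s) (mem_powerset.mp hT h)
    simp [hiT]
  have hne : (s.erase i).Nonempty := by
    rw [← Finset.card_pos, Finset.card_erase_of_mem hi]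
    omega
  have hz : ∑ T ∈ (s.erase i).powerset, (-1:ℝ)^T.card = 0 := by
    have h := Finset.sum_powerset_neg_one_pow_card_of_nonempty hne
    exact_mod_cast h
  have e2 : ∑ T ∈ (s.erase i).powerset,
      (-1:ℝ)^(insert i T).card * (if i ∈ insert i T then c i else 0) = 0 := by
    have estep : ∀ T ∈ (s.erase i).powerset,
        (-1:ℝ)^(insert i T).card * (if i ∈ insert i T then c i else 0)
          = (-(c i)) * (-1:ℝ)^T.card := by
      intro T hT
      have hiT : i ∉ T := fun h => (notMem_erase i s) (mem_powerset.mp hT h)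
      rw [card_insert_of_notMem hiT, if_pos (mem_insert_self i T), pow_succ]
      ring
    rw [Finset.sum_congr rfl estep, ← Finset.mul_sum, hz, mul_zero]
  rw [e1, e2, add_zero]

lemma sign_aux {n k : ℕ} (hk : k ≤ n) : (-1:ℝ)^n * (-1:ℝ)^(n-k) = (-1:ℝ)^k := by
  have h : (-1:ℝ)^(n-k) * (-1:ℝ)^k = (-1:ℝ)^n := by rw [← pow_add, Nat.sub_add_cancel hk]
  have h2 : (-1:ℝ)^(n-k) * (-1:ℝ)^(n-k) = 1 := by
    rw [← pow_add]
    exact Even.neg_one_pow ⟨n-k, rfl⟩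
  calc (-1:ℝ)^n * (-1:ℝ)^(n-k) = ((-1:ℝ)^(n-k) * (-1:ℝ)^k) * (-1:ℝ)^(n-k) := by rw [h]
    _ = ((-1:ℝ)^(n-k) * (-1:ℝ)^(n-k)) * (-1:ℝ)^k := by ring
    _ = (-1:ℝ)^k := by rw [h2, one_mul]

end Aux

/-- intrinsic sign of logarithmic atoms.  For positive reals
`p_1, …, p_n` with `n ≥ 2`, `(−1)^n L°(p_1, …, p_n) ≥ 0`. -/
theorem sign_interiorLoss {n : ℕ} (hn : 2 ≤ n) (p : Fin n → ℝ) (hp : ∀ i, 0 < p i) :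
    0 ≤ (-1 : ℝ) ^ n * interiorLoss Finset.univ p := by
  classical
  have hp' : ∀ i ∈ (Finset.univ : Finset (Fin n)), 0 ≤ p i := fun i _ => (hp i).le
  have hcard : (Finset.univ : Finset (Fin n)).card = n := Finset.card_fin n
  unfold interiorLoss
  rw [Finset.mul_sum]
  have step : ∀ T ∈ (Finset.univ : Finset (Fin n)).powerset,
      (-1:ℝ)^n * ((-1:ℝ)^((Finset.univ : Finset (Fin n)).card - T.card) * totalLoss T p)
        = (-1:ℝ)^T.card * (pS p T * Real.log (pS p T))
          - (-1:ℝ)^T.card * (∑ i ∈ T, p i * Real.log (p i)) := by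
    intro T hT
    have hk : T.card ≤ n := le_of_le_of_eq (card_le_card (mem_powerset.mp hT)) hcard
    have hsgn : (-1:ℝ)^n * (-1:ℝ)^(n - T.card) = (-1:ℝ)^T.card := sign_aux hk
    have htl : totalLoss T p
        = pS p T * Real.log (pS p T) - ∑ i ∈ T, p i * Real.log (p i) := by
      unfold totalLoss pS
      have e1 : ∀ i ∈ T, p i * Real.log (1 / p i) = -(p i * Real.log (p i)) := by
        intro i _
        rw [one_div, Real.log_inv]
        ring
      rw [Finset.sum_congr rfl e1, one_div, Real.log_inv, Finset.sum_neg_distrib]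
      ring
    rw [hcard, ← mul_assoc, hsgn, htl]
    ring
  rw [Finset.sum_congr rfl step, Finset.sum_sub_distrib]
  have hz : ∑ T ∈ (Finset.univ : Finset (Fin n)).powerset,
      (-1:ℝ)^T.card * ∑ i ∈ T, p i * Real.log (p i) = 0 :=
    linzero _ (by rw [hcard]; exact hn) _
  rw [hz, sub_zero]
  exact sf_nonneg_zero p hp' (by rw [hcard]; exact hn)
end

section
/- Interior magnitude can only decrease: for positive reals p_1, …, p_{n−1} with n ≥ 3 and any τ > 0, one has the strict inequality |L°(p_1, …, p_{n−1}, τ)| < |L°(p_1, …, p_{n−1})|. -/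
open Finset

set_option linter.unusedSectionVars false

section Aux
variable {ι : Type*} [DecidableEq ι]





/-- The alternating sum `∑_{T ⊆ s} (−1)^{|s|−|T|} f (c + ∑_{i∈T} p i)`. -/
noncomputable def ediff (p : ι → ℝ) (s : Finset ι) (f : ℝ → ℝ) (c : ℝ) : ℝ :=
  ∑ T ∈ s.powerset, (-1 : ℝ) ^ (s.card - T.card) * f (c + ∑ i ∈ T, p i)

lemma neg_one_pow_sub {a b : ℕ} (h : b ≤ a) : (-1 : ℝ) ^ (a - b) = (-1) ^ a * (-1) ^ b := by
  conv_rhs => rw [← Nat.sub_add_cancel h, pow_add, mul_assoc, ← pow_add, ← two_mul, pow_mul,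
    neg_one_sq, one_pow, mul_one]

lemma ediff_empty (p : ι → ℝ) (f : ℝ → ℝ) (c : ℝ) : ediff p ∅ f c = f c := by
  simp [ediff]

lemma ediff_insert (p : ι → ℝ) {a : ι} {s : Finset ι} (ha : a ∉ s) (f : ℝ → ℝ) (c : ℝ) :
    ediff p (insert a s) f c = ediff p s f (c + p a) - ediff p s f c := by
  have hdisj : Disjoint s.powerset (s.powerset.image (insert a)) := by
    rw [Finset.disjoint_left]
    intro T hT hT'
    rcases Finset.mem_image.mp hT' with ⟨U, _, rfl⟩
    exact ha (Finset.mem_powerset.mp hT (Finset.mem_insert_self a U))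
  have hinj : ∀ U ∈ s.powerset, ∀ V ∈ s.powerset, insert a U = insert a V → U = V := by
    intro U hU V hV h
    have hU' : a ∉ U := fun h' => ha (Finset.mem_powerset.mp hU h')
    have hV' : a ∉ V := fun h' => ha (Finset.mem_powerset.mp hV h')
    rw [← Finset.erase_insert hU', ← Finset.erase_insert hV', h]
  rw [ediff, Finset.powerset_insert, Finset.sum_union hdisj, Finset.sum_image hinj,
    Finset.card_insert_of_notMem ha]
  have h1 : ∑ T ∈ s.powerset, (-1 : ℝ) ^ (s.card + 1 - T.card) * f (c + ∑ i ∈ T, p i)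
      = - ediff p s f c := by
    rw [ediff, ← Finset.sum_neg_distrib]
    refine Finset.sum_congr rfl fun T hT => ?_
    have hc : T.card ≤ s.card := Finset.card_le_card (Finset.mem_powerset.mp hT)
    rw [Nat.succ_sub hc, pow_succ]
    ring
  have h2 : ∑ T ∈ s.powerset, (-1 : ℝ) ^ (s.card + 1 - (insert a T).card)
        * f (c + ∑ i ∈ insert a T, p i) = ediff p s f (c + p a) := by
    rw [ediff]
    refine Finset.sum_congr rfl fun T hT => ?_
    have haT : a ∉ T := fun h' => ha (Finset.mem_powerset.mp hT h')
    rw [Finset.card_insert_of_notMem haT, Finset.sum_insert haT, Nat.succ_sub_succ]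
    ring_nf
  rw [h1, h2]; ring

lemma sum_powerset_sign_eq_zero {s : Finset ι} (hs : s.Nonempty) :
    ∑ T ∈ s.powerset, (-1 : ℝ) ^ (s.card - T.card) = 0 := by
  have h0 : (∑ T ∈ s.powerset, (-1 : ℤ) ^ T.card) = 0 :=
    Finset.sum_powerset_neg_one_pow_card_of_nonempty hs
  have : ∑ T ∈ s.powerset, (-1 : ℝ) ^ (s.card - T.card)
      = (-1) ^ s.card * ∑ T ∈ s.powerset, (-1 : ℝ) ^ T.card := by
    rw [Finset.mul_sum]
    refine Finset.sum_congr rfl fun T hT => ?_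
    exact neg_one_pow_sub (Finset.card_le_card (Finset.mem_powerset.mp hT))
  rw [this]
  have h1 : (∑ T ∈ s.powerset, (-1 : ℝ) ^ T.card) = 0 := by
    have := congrArg (Int.cast : ℤ → ℝ) h0
    push_cast at this
    exact this
  rw [h1, mul_zero]


lemma ediff_const_mul (p : ι → ℝ) (s : Finset ι) (k : ℝ) (f : ℝ → ℝ) (c : ℝ) :
    ediff p s (fun x => k * f x) c = k * ediff p s f c := by
  rw [ediff, ediff, Finset.mul_sum]
  exact Finset.sum_congr rfl fun T _ => by ring

lemma ediff_add (p : ι → ℝ) (s : Finset ι) (f g : ℝ → ℝ) (c : ℝ) :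
    ediff p s (fun x => f x + g x) c = ediff p s f c + ediff p s g c := by
  rw [ediff, ediff, ediff, ← Finset.sum_add_distrib]
  exact Finset.sum_congr rfl fun T _ => by ring

lemma ediff_hasDerivAt (p : ι → ℝ) (s : Finset ι) (hp : ∀ i ∈ s, 0 ≤ p i) {f f' : ℝ → ℝ}
    (hf : ∀ x : ℝ, 0 < x → HasDerivAt f (f' x) x) {c : ℝ} (hc : 0 < c) :
    HasDerivAt (fun x => ediff p s f x) (ediff p s f' c) c := by
  unfold ediff
  apply HasDerivAt.fun_sum
  intro T hT
  have ht : 0 ≤ ∑ i ∈ T, p i :=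
    Finset.sum_nonneg fun i hi => hp i (Finset.mem_powerset.mp hT hi)
  have h1 : HasDerivAt (fun x : ℝ => f (x + ∑ i ∈ T, p i)) (f' (c + ∑ i ∈ T, p i)) c := by
    have h2 := (hf (c + ∑ i ∈ T, p i) (by linarith)).comp c
      ((hasDerivAt_id c).add_const (∑ i ∈ T, p i))
    rw [mul_one] at h2
    exact h2
  simpa using h1.const_mul ((-1 : ℝ) ^ (s.card - T.card))

lemma ediff_continuous (p : ι → ℝ) (s : Finset ι) {f : ℝ → ℝ} (hf : Continuous f) :
    Continuous (fun x => ediff p s f x) := by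
  unfold ediff
  apply continuous_finset_sum
  intro T _
  exact continuous_const.mul (hf.comp (continuous_id.add continuous_const))





lemma ediff_const (p : ι → ℝ) {s : Finset ι} (hs : s.Nonempty) (k c : ℝ) :
    ediff p s (fun _ => k) c = 0 := by
  rw [ediff, ← Finset.sum_mul, sum_powerset_sign_eq_zero hs, zero_mul]

/-- Core sign lemma for negative powers. -/
lemma ediff_zpow_pos (p : ι → ℝ) :
    ∀ n : ℕ, ∀ j : ℕ, ∀ s : Finset ι, s.card = n → (∀ i ∈ s, 0 < p i) →
      ∀ c : ℝ, 0 < c → 0 < (-1 : ℝ) ^ n * ediff p s (fun x => x ^ (-(j + 1 : ℤ))) c := by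
  intro n
  induction n with
  | zero =>
    intro j s hcard hp c hc
    rw [Finset.card_eq_zero.mp hcard, ediff_empty, pow_zero, one_mul]
    exact zpow_pos hc _
  | succ n ih =>
    intro j s hcard hp c hc
    obtain ⟨a, ha⟩ : s.Nonempty := Finset.card_pos.mp (by omega)
    have hat : a ∉ s.erase a := Finset.notMem_erase a s
    have hs : s = insert a (s.erase a) := (Finset.insert_erase ha).symm
    have htc : (s.erase a).card = n := by
      rw [Finset.card_erase_of_mem ha, hcard]; rfl
    have hpt : ∀ i ∈ s.erase a, 0 < p i := fun i hi => hp i (Finset.mem_of_mem_erase hi)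
    have hpt' : ∀ i ∈ s.erase a, 0 ≤ p i := fun i hi => (hpt i hi).le
    set F : ℝ → ℝ := fun x =>
      (-1 : ℝ) ^ (n + 1) * ediff p (s.erase a) (fun y => y ^ (-(j + 1 : ℤ))) x with hF
    have hd : ∀ x : ℝ, 0 < x → HasDerivAt F
        ((-1 : ℝ) ^ (n + 1) *
          ediff p (s.erase a) (fun y => ((-(j + 1 : ℤ) : ℤ) : ℝ) * y ^ (-(j + 1 : ℤ) - 1)) x) x := by
      intro x hx
      exact (ediff_hasDerivAt p (s.erase a) hpt'
        (fun y hy => hasDerivAt_zpow (-(j + 1 : ℤ)) y (Or.inl hy.ne')) hx).const_mul _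
    have hderiv : ∀ x : ℝ, 0 < x → 0 < deriv F x := by
      intro x hx
      rw [(hd x hx).deriv]
      have hexp : (fun y : ℝ => ((-(j + 1 : ℤ) : ℤ) : ℝ) * y ^ (-(j + 1 : ℤ) - 1))
          = fun y : ℝ => (-(j : ℝ) - 1) * y ^ (-((j + 1 : ℕ) + 1 : ℤ)) := by
        funext y
        have h1 : (-(j + 1 : ℤ) - 1) = (-((j + 1 : ℕ) + 1 : ℤ)) := by push_cast; ring
        rw [h1]
        push_cast
        ring
      rw [hexp, ediff_const_mul]
      have hih := ih (j + 1) (s.erase a) htc hpt x hx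
      have : (-1 : ℝ) ^ (n + 1) * ((-(j : ℝ) - 1) * ediff p (s.erase a)
          (fun y => y ^ (-((j + 1 : ℕ) + 1 : ℤ))) x)
          = ((j : ℝ) + 1) * ((-1 : ℝ) ^ n * ediff p (s.erase a)
            (fun y => y ^ (-((j + 1 : ℕ) + 1 : ℤ))) x) := by ring
      rw [this]
      positivity
    have hmono : StrictMonoOn F (Set.Ioi (0 : ℝ)) := by
      apply strictMonoOn_of_deriv_pos (convex_Ioi 0)
      · exact fun x hx => ((hd x hx).continuousAt).continuousWithinAt
      · intro x hx
        rw [interior_Ioi] at hx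
        exact hderiv x hx
    have hpa : 0 < p a := hp a ha
    have hlt : F c < F (c + p a) :=
      hmono (Set.mem_Ioi.mpr hc) (Set.mem_Ioi.mpr (by linarith)) (by linarith)
    rw [hs, ediff_insert p hat]
    have : (-1 : ℝ) ^ (n + 1) * (ediff p (s.erase a) (fun x => x ^ (-(j + 1 : ℤ))) (c + p a)
        - ediff p (s.erase a) (fun x => x ^ (-(j + 1 : ℤ))) c) = F (c + p a) - F c := by
      rw [hF]; ring
    rw [this]
    linarith


lemma ediff_log_pos (p : ι → ℝ) {s : Finset ι} (hs : s.Nonempty)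
    (hp : ∀ i ∈ s, 0 < p i) {c : ℝ} (hc : 0 < c) :
    0 < (-1 : ℝ) ^ (s.card + 1) * ediff p s Real.log c := by
  obtain ⟨a, ha⟩ := hs
  have hat : a ∉ s.erase a := Finset.notMem_erase a s
  have hseq : s = insert a (s.erase a) := (Finset.insert_erase ha).symm
  set n := (s.erase a).card with hn
  have hsc : s.card = n + 1 := by
    rw [hn, Finset.card_erase_of_mem ha]
    have : 1 ≤ s.card := Finset.card_pos.mpr ⟨a, ha⟩
    omega
  have hpt : ∀ i ∈ s.erase a, 0 < p i := fun i hi => hp i (Finset.mem_of_mem_erase hi)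
  have hpt' : ∀ i ∈ s.erase a, 0 ≤ p i := fun i hi => (hpt i hi).le
  set F : ℝ → ℝ := fun x => (-1 : ℝ) ^ (n + 2) * ediff p (s.erase a) Real.log x with hF
  have hd : ∀ x : ℝ, 0 < x → HasDerivAt F
      ((-1 : ℝ) ^ (n + 2) * ediff p (s.erase a) (fun y => y⁻¹) x) x := by
    intro x hx
    exact (ediff_hasDerivAt p (s.erase a) hpt'
      (fun y hy => Real.hasDerivAt_log hy.ne') hx).const_mul _
  have hderiv : ∀ x : ℝ, 0 < x → 0 < deriv F x := by
    intro x hx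
    rw [(hd x hx).deriv]
    have hinv : (fun y : ℝ => y⁻¹) = fun y : ℝ => y ^ (-((0 : ℕ) + 1 : ℤ)) := by
      funext y; norm_num
    rw [hinv]
    have hih := ediff_zpow_pos p n 0 (s.erase a) rfl hpt x hx
    have : (-1 : ℝ) ^ (n + 2) * ediff p (s.erase a) (fun y => y ^ (-((0 : ℕ) + 1 : ℤ))) x
        = (-1 : ℝ) ^ n * ediff p (s.erase a) (fun y => y ^ (-((0 : ℕ) + 1 : ℤ))) x := by
      ring
    rw [this]
    exact hih
  have hmono : StrictMonoOn F (Set.Ioi (0 : ℝ)) := by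
    apply strictMonoOn_of_deriv_pos (convex_Ioi 0)
    · exact fun x hx => ((hd x hx).continuousAt).continuousWithinAt
    · intro x hx
      rw [interior_Ioi] at hx
      exact hderiv x hx
  have hpa : 0 < p a := hp a ha
  have hlt : F c < F (c + p a) :=
    hmono (Set.mem_Ioi.mpr hc) (Set.mem_Ioi.mpr (by linarith)) (by linarith)
  rw [hsc, hseq, ediff_insert p hat]
  have : (-1 : ℝ) ^ (n + 1 + 1) * (ediff p (s.erase a) Real.log (c + p a)
      - ediff p (s.erase a) Real.log c) = F (c + p a) - F c := by
    rw [hF]; ring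
  rw [this]
  linarith

lemma ediff_mul_log_pos (p : ι → ℝ) {s : Finset ι} (hs : 2 ≤ s.card)
    (hp : ∀ i ∈ s, 0 < p i) {c : ℝ} (hc : 0 ≤ c) :
    0 < (-1 : ℝ) ^ s.card * ediff p s (fun x => x * Real.log x) c := by
  obtain ⟨a, ha⟩ : s.Nonempty := Finset.card_pos.mp (by omega)
  have hat : a ∉ s.erase a := Finset.notMem_erase a s
  have hseq : s = insert a (s.erase a) := (Finset.insert_erase ha).symm
  have htc : (s.erase a).card = s.card - 1 := Finset.card_erase_of_mem ha
  have htne : (s.erase a).Nonempty := Finset.card_pos.mp (by omega)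
  have hpt : ∀ i ∈ s.erase a, 0 < p i := fun i hi => hp i (Finset.mem_of_mem_erase hi)
  have hpt' : ∀ i ∈ s.erase a, 0 ≤ p i := fun i hi => (hpt i hi).le
  set F : ℝ → ℝ := fun x =>
    (-1 : ℝ) ^ s.card * ediff p (s.erase a) (fun y => y * Real.log y) x with hF
  have hd : ∀ x : ℝ, 0 < x → HasDerivAt F
      ((-1 : ℝ) ^ s.card * ediff p (s.erase a) (fun y => Real.log y + 1) x) x := by
    intro x hx
    exact (ediff_hasDerivAt p (s.erase a) hpt'
      (fun y hy => Real.hasDerivAt_mul_log hy.ne') hx).const_mul _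
  have hderiv : ∀ x : ℝ, 0 < x → 0 < deriv F x := by
    intro x hx
    rw [(hd x hx).deriv, ediff_add, ediff_const p htne 1 x, add_zero]
    have hih := ediff_log_pos p htne hpt hx
    have hexp : (-1 : ℝ) ^ s.card = (-1 : ℝ) ^ ((s.erase a).card + 1) := by
      rw [htc]
      congr 1
      omega
    rw [hexp]
    exact hih
  have hmono : StrictMonoOn F (Set.Ici (0 : ℝ)) := by
    apply strictMonoOn_of_deriv_pos (convex_Ici 0)
    · exact (continuous_const.mul (ediff_continuous p (s.erase a) Real.continuous_mul_log)).continuousOn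
    · intro x hx
      rw [interior_Ici] at hx
      exact hderiv x hx
  have hpa : 0 < p a := hp a ha
  have hlt : F c < F (c + p a) :=
    hmono (Set.mem_Ici.mpr hc) (Set.mem_Ici.mpr (by linarith)) (by linarith)
  nth_rewrite 2 [hseq]
  rw [ediff_insert p hat]
  have : (-1 : ℝ) ^ s.card * (ediff p (s.erase a) (fun x => x * Real.log x) (c + p a)
      - ediff p (s.erase a) (fun x => x * Real.log x) c) = F (c + p a) - F c := by
    rw [hF]; ring
  rw [this]
  linarith



/-- `ediff` with `f = id` rewrites the inner-sum alternating sum. -/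
lemma sum_powerset_sign_mul_sum (g : ι → ℝ) {s : Finset ι} (hs : s.Nonempty) (c : ℝ) :
    ∑ T ∈ s.powerset, (-1 : ℝ) ^ (s.card - T.card) * (∑ i ∈ T, g i)
      = ediff g s (fun x => x) c := by
  rw [ediff]
  have : ∑ T ∈ s.powerset, (-1 : ℝ) ^ (s.card - T.card) * (c + ∑ i ∈ T, g i)
      = (∑ T ∈ s.powerset, (-1 : ℝ) ^ (s.card - T.card)) * c
        + ∑ T ∈ s.powerset, (-1 : ℝ) ^ (s.card - T.card) * (∑ i ∈ T, g i) := by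
    rw [Finset.sum_mul, ← Finset.sum_add_distrib]
    exact Finset.sum_congr rfl fun T _ => by ring
  rw [this, sum_powerset_sign_eq_zero hs, zero_mul, zero_add]

lemma sum_powerset_sign_mul_sum_eq_zero (g : ι → ℝ) {s : Finset ι} (hs : 2 ≤ s.card) :
    ∑ T ∈ s.powerset, (-1 : ℝ) ^ (s.card - T.card) * (∑ i ∈ T, g i) = 0 := by
  obtain ⟨a, ha⟩ : s.Nonempty := Finset.card_pos.mp (by omega)
  have hat : a ∉ s.erase a := Finset.notMem_erase a s
  have hseq : s = insert a (s.erase a) := (Finset.insert_erase ha).symm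
  have htne : (s.erase a).Nonempty := by
    rw [← Finset.card_pos, Finset.card_erase_of_mem ha]; omega
  rw [sum_powerset_sign_mul_sum g (by rw [← Finset.card_pos]; omega : s.Nonempty) 0]
  nth_rewrite 1 [hseq]
  rw [ediff_insert g hat, ← sum_powerset_sign_mul_sum g htne (0 + g a),
    ← sum_powerset_sign_mul_sum g htne 0, sub_self]

lemma totalLoss_eq (T : Finset ι) (p : ι → ℝ) :
    totalLoss T p = (∑ i ∈ T, p i) * Real.log (∑ i ∈ T, p i)
      - ∑ i ∈ T, p i * Real.log (p i) := by
  rw [totalLoss]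
  simp only [one_div, Real.log_inv, mul_neg, Finset.sum_neg_distrib]
  ring

lemma interiorLoss_eq_ediff (p : ι → ℝ) {s : Finset ι} (hs : 2 ≤ s.card) :
    interiorLoss s p = ediff p s (fun x => x * Real.log x) 0 := by
  rw [interiorLoss, ediff]
  have : ∀ T ∈ s.powerset, (-1 : ℝ) ^ (s.card - T.card) * totalLoss T p
      = (-1 : ℝ) ^ (s.card - T.card) * ((0 + ∑ i ∈ T, p i) * Real.log (0 + ∑ i ∈ T, p i))
        - (-1 : ℝ) ^ (s.card - T.card) * (∑ i ∈ T, p i * Real.log (p i)) := by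
    intro T _
    rw [totalLoss_eq, zero_add]
    ring
  rw [Finset.sum_congr rfl this, Finset.sum_sub_distrib,
    sum_powerset_sign_mul_sum_eq_zero (fun i => p i * Real.log (p i)) hs, sub_zero]

lemma ediff_map {κ : Type*} [DecidableEq κ] (e : ι ↪ κ) (q : κ → ℝ) (f : ℝ → ℝ) :
    ∀ s : Finset ι, ∀ c : ℝ, ediff q (s.map e) f c = ediff (q ∘ e) s f c := by
  intro s
  induction s using Finset.induction_on with
  | empty => intro c; simp [ediff_empty]
  | @insert a t ha ih =>
    intro c
    have hae : e a ∉ t.map e := by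
      simp only [Finset.mem_map, not_exists]
      intro b hb
      exact ha ((e.injective hb.2) ▸ hb.1)
    rw [Finset.map_insert, ediff_insert q hae, ediff_insert (q ∘ e) ha, ih, ih]
    rfl



end Aux

/-- interior magnitude can only decrease.  For positive reals
`p_1, …, p_{n−1}` with `n ≥ 3` (so `m = n − 1 ≥ 2` fixed arguments) and any `τ > 0`,
`|L°(p_1, …, p_{n−1}, τ)| < |L°(p_1, …, p_{n−1})|`. -/

theorem abs_interiorLoss_lt {m : ℕ} (hm : 2 ≤ m)
    (p : Fin m → ℝ) (hp : ∀ i, 0 < p i) (τ : ℝ) (hτ : 0 < τ) :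
    |interiorLoss Finset.univ (Fin.snoc p τ)| < |interiorLoss Finset.univ p| := by
  have hcard : (Finset.univ : Finset (Fin m)).card = m := Finset.card_fin m
  have hcard' : (Finset.univ : Finset (Fin (m + 1))).card = m + 1 := Finset.card_fin (m + 1)
  set q : Fin (m + 1) → ℝ := Fin.snoc p τ with hqdef
  have hq : ∀ i, 0 < q i := by
    intro i
    refine Fin.lastCases ?_ ?_ i
    · simpa [hqdef] using hτ
    · intro j; simpa [hqdef] using hp j
  have hA : interiorLoss Finset.univ p = ediff p Finset.univ (fun x => x * Real.log x) 0 :=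
    interiorLoss_eq_ediff p (by rw [hcard]; exact hm)
  have hB : interiorLoss Finset.univ q = ediff q Finset.univ (fun x => x * Real.log x) 0 :=
    interiorLoss_eq_ediff q (by rw [hcard']; omega)
  have hlast : Fin.last m ∉ (Finset.univ : Finset (Fin m)).map Fin.castSuccEmb := by
    simp only [Finset.mem_map, Finset.mem_univ, true_and, not_exists]
    intro j
    exact fun hj => (Fin.castSucc_lt_last j).ne (by exact_mod_cast hj)
  have huniv : (Finset.univ : Finset (Fin (m + 1)))
      = insert (Fin.last m) ((Finset.univ : Finset (Fin m)).map Fin.castSuccEmb) := by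
    rw [Fin.univ_castSuccEmb, Finset.cons_eq_insert]
  have hqp : q ∘ ⇑Fin.castSuccEmb = p := by
    funext j
    simp [hqdef]
  have hsplit : ediff q Finset.univ (fun x => x * Real.log x) 0
      = ediff p Finset.univ (fun x => x * Real.log x) τ
        - ediff p Finset.univ (fun x => x * Real.log x) 0 := by
    rw [huniv, ediff_insert q hlast,
      ediff_map Fin.castSuccEmb q (fun x => x * Real.log x) Finset.univ,
      ediff_map Fin.castSuccEmb q (fun x => x * Real.log x) Finset.univ, hqp]
    have h2 : q (Fin.last m) = τ := by simp [hqdef]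
    rw [h2, zero_add]
  have hApos : 0 < (-1 : ℝ) ^ m * ediff p Finset.univ (fun x => x * Real.log x) 0 := by
    have := ediff_mul_log_pos p (s := Finset.univ) (by rw [hcard]; exact hm)
      (fun i _ => hp i) (c := 0) le_rfl
    rwa [hcard] at this
  have hBpos : 0 < (-1 : ℝ) ^ m * ediff p Finset.univ (fun x => x * Real.log x) τ := by
    have := ediff_mul_log_pos p (s := Finset.univ) (by rw [hcard]; exact hm)
      (fun i _ => hp i) (c := τ) hτ.le
    rwa [hcard] at this
  have hCpos : 0 < (-1 : ℝ) ^ (m + 1) *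
      (ediff p Finset.univ (fun x => x * Real.log x) τ
        - ediff p Finset.univ (fun x => x * Real.log x) 0) := by
    have := ediff_mul_log_pos q (s := Finset.univ) (by rw [hcard']; omega)
      (fun i _ => hq i) (c := 0) le_rfl
    rwa [hcard', hsplit] at this
  rw [hB, hsplit, hA]
  rcases Nat.even_or_odd m with he | ho
  · have e1 : ((-1 : ℝ)) ^ m = 1 := he.neg_one_pow
    have e2 : ((-1 : ℝ)) ^ (m + 1) = -1 := by rw [pow_succ, e1]; ring
    rw [e1, one_mul] at hApos hBpos
    rw [e2] at hCpos
    rw [abs_of_neg (by linarith), abs_of_pos hApos]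
    linarith
  · have e1 : ((-1 : ℝ)) ^ m = -1 := ho.neg_one_pow
    have e2 : ((-1 : ℝ)) ^ (m + 1) = 1 := by rw [pow_succ, e1]; ring
    rw [e1] at hApos hBpos
    rw [e2, one_mul] at hCpos
    rw [abs_of_pos (by linarith), abs_of_neg (by linarith)]
    linarith
end

section
/- Entropy as the measure of the content: H(X) = Σ_{S ∈ C(X)} L°(S), i.e. the Shannon entropy of X equals the sum of the interior losses of all subsets of Ω on which X is not constant. -/
open Finset
open scoped Classical

/-- The probability that the random variable `X : Ω → α` takes the value `a`,
with respect to the mass function `P`. -/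
noncomputable def probOf {Ω α : Type*} [Fintype Ω] (P : Ω → ℝ) (X : Ω → α) (a : α) : ℝ :=
  ∑ ω ∈ Finset.univ.filter (fun ω => X ω = a), P ω

/-- The Shannon entropy `H(X) = Σ_{a ∈ X(Ω)} P(X = a) log(1/P(X = a))` of a random
variable `X : Ω → α` with respect to the mass function `P`. -/
noncomputable def entropy {Ω α : Type*} [Fintype Ω] (P : Ω → ℝ) (X : Ω → α) : ℝ :=
  ∑ a ∈ Finset.univ.image X, probOf P X a * Real.log (1 / probOf P X a)

/-- The content `C(X)` of a random variable `X : Ω → α`: the collection of subsets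
`S ⊆ Ω` with `|S| ≥ 2` on which `X` is not constant. -/
noncomputable def content {Ω α : Type*} [Fintype Ω] (X : Ω → α) : Finset (Finset Ω) :=
  Finset.univ.filter (fun S => 2 ≤ S.card ∧ ∃ ω ∈ S, ∃ ω2 ∈ S, X ω ≠ X ω2)

lemma alt_sum_real {ι : Type*} [DecidableEq ι] (s : Finset ι) :
    ∑ T ∈ s.powerset, (-1 : ℝ) ^ T.card = if s = ∅ then 1 else 0 := by
  have := Finset.sum_powerset_neg_one_pow_card (x := s)
  have h2 : ((∑ m ∈ s.powerset, (-1 : ℤ) ^ m.card : ℤ) : ℝ)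
      = ∑ T ∈ s.powerset, (-1 : ℝ) ^ T.card := by push_cast; rfl
  rw [← h2, this]
  split <;> simp

lemma inner_alt {ι : Type*} [DecidableEq ι] (s U : Finset ι) (hU : U ⊆ s) :
    ∑ T ∈ s.powerset.filter (fun T => U ⊆ T), (-1 : ℝ) ^ (T.card - U.card)
      = if U = s then 1 else 0 := by
  have key : ∑ T ∈ s.powerset.filter (fun T => U ⊆ T), (-1 : ℝ) ^ (T.card - U.card)
      = ∑ V ∈ (s \ U).powerset, (-1 : ℝ) ^ V.card := by
    refine Finset.sum_nbij' (fun T => T \ U) (fun V => U ∪ V) ?_ ?_ ?_ ?_ ?_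
    · intro T hT
      simp only [mem_filter, mem_powerset] at hT
      exact mem_powerset.2 (sdiff_subset_sdiff hT.1 le_rfl)
    · intro V hV
      simp only [mem_powerset] at hV
      refine mem_filter.2 ⟨mem_powerset.2 (union_subset hU (hV.trans sdiff_subset)), subset_union_left⟩
    · intro T hT
      simp only [mem_filter, mem_powerset] at hT
      rw [Finset.union_sdiff_of_subset hT.2]
    · intro V hV
      simp only [mem_powerset] at hV
      have hd : Disjoint U V := disjoint_of_subset_right hV sdiff_disjoint.symm
      rw [Finset.union_sdiff_cancel_left hd]
    · intro T hT
      simp only [mem_filter, mem_powerset] at hT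
      rw [card_sdiff_of_subset hT.2]
  rw [key, alt_sum_real]
  have : (s \ U = ∅) = (U = s) := by
    rw [sdiff_eq_empty_iff_subset]
    exact propext ⟨fun h => (subset_antisymm hU h).symm ▸ rfl, fun h => h ▸ le_rfl⟩
  simp only [this]

lemma inversion {ι : Type*} [DecidableEq ι] (s : Finset ι) (f : Finset ι → ℝ) :
    ∑ T ∈ s.powerset, ∑ U ∈ T.powerset, (-1 : ℝ) ^ (T.card - U.card) * f U = f s := by
  rw [Finset.sum_comm' (t' := s.powerset)
      (s' := fun U => s.powerset.filter (fun T => U ⊆ T))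
      (fun T U => by
        simp only [mem_powerset, mem_filter]
        constructor
        · rintro ⟨h1, h2⟩; exact ⟨⟨h1, h2⟩, h2.trans h1⟩
        · rintro ⟨⟨h1, h2⟩, h3⟩; exact ⟨h1, h2⟩)]
  have : ∀ U ∈ s.powerset,
      ∑ T ∈ s.powerset.filter (fun T => U ⊆ T), (-1 : ℝ) ^ (T.card - U.card) * f U
        = (if U = s then 1 else 0) * f U := by
    intro U hU
    rw [← Finset.sum_mul, inner_alt s U (mem_powerset.1 hU)]
  rw [Finset.sum_congr rfl this]
  simp [Finset.sum_ite_eq' s.powerset s (fun U => f U)]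

lemma totalLoss_eq_sum_interior {ι : Type*} [DecidableEq ι] (s : Finset ι) (p : ι → ℝ) :
    totalLoss s p = ∑ T ∈ s.powerset, interiorLoss T p := by
  unfold interiorLoss
  exact (inversion s (fun U => totalLoss U p)).symm

lemma interiorLoss_empty {ι : Type*} [DecidableEq ι] (p : ι → ℝ) :
    interiorLoss (∅ : Finset ι) p = 0 := by
  simp [interiorLoss, totalLoss]

/-- entropy as the measure of the content.
`H(X) = Σ_{S ∈ C(X)} L°(S)`: the Shannon entropy of `X` equals the sum of the interior
losses of (the probabilities of the points of) all subsets of `Ω` on which `X` is not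
constant. -/
theorem entropy_eq_sum_content {Ω α : Type*} [Fintype Ω] [Nonempty Ω]
    [Fintype α] (P : Ω → ℝ) (hP : ∀ ω, 0 < P ω) (hsum : ∑ ω, P ω = 1) (X : Ω → α) :
    entropy P X = ∑ S ∈ content X, interiorLoss S P := by
  classical
  set fib : α → Finset Ω := fun a => Finset.univ.filter (fun ω => X ω = a) with hfibdef
  -- Step B : entropy = totalLoss univ - ∑ fibers
  have hfibsum : ∑ a ∈ Finset.univ.image X, ∑ ω ∈ fib a, P ω * Real.log (1 / P ω)
      = ∑ ω, P ω * Real.log (1 / P ω) :=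
    Finset.sum_fiberwise_of_maps_to (fun x _ => Finset.mem_image_of_mem X (mem_univ x)) _
  have stepB : entropy P X
      = totalLoss Finset.univ P - ∑ a ∈ Finset.univ.image X, totalLoss (fib a) P := by
    simp only [entropy, totalLoss, probOf, hsum, Finset.sum_sub_distrib, hfibsum]
    simp [Real.log_one]
    rfl
  -- the pieces
  set iL : Finset Ω → ℝ := fun T => interiorLoss T P with hiLdef
  have hiL0 : iL ∅ = 0 := interiorLoss_empty P
  set D : α → Finset (Finset Ω) := fun a => ((fib a).powerset).erase ∅ with hDdef
  have hmemD : ∀ a T, T ∈ D a ↔ T ≠ ∅ ∧ T ⊆ fib a := by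
    intro a T; simp [hDdef, Finset.mem_erase, Finset.mem_powerset]
  have hdisj : (↑(Finset.univ.image X) : Set α).PairwiseDisjoint D := by
    intro a _ b _ hab
    simp only [Finset.disjoint_left, Function.onFun]
    intro T hTa hTb
    obtain ⟨hne, hsa⟩ := (hmemD a T).1 hTa
    obtain ⟨-, hsb⟩ := (hmemD b T).1 hTb
    obtain ⟨ω, hω⟩ := Finset.nonempty_of_ne_empty hne
    have h1 : X ω = a := (Finset.mem_filter.1 (hsa hω)).2
    have h2 : X ω = b := (Finset.mem_filter.1 (hsb hω)).2
    exact hab (h1 ▸ h2)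
  set notC : Finset (Finset Ω) :=
    Finset.univ.filter (fun S : Finset Ω =>
      ¬(2 ≤ S.card ∧ ∃ ω ∈ S, ∃ ω2 ∈ S, X ω ≠ X ω2)) with hnotCdef
  have hbi : (Finset.univ.image X).biUnion D = notC.erase ∅ := by
    ext T
    constructor
    · intro hT
      obtain ⟨a, _, hTa⟩ := Finset.mem_biUnion.1 hT
      obtain ⟨hne, hsa⟩ := (hmemD a T).1 hTa
      refine Finset.mem_erase.2 ⟨hne, Finset.mem_filter.2 ⟨Finset.mem_univ _, ?_⟩⟩
      rintro ⟨-, ω, hω, ω2, hω2, hxx⟩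
      have h1 : X ω = a := (Finset.mem_filter.1 (hsa hω)).2
      have h2 : X ω2 = a := (Finset.mem_filter.1 (hsa hω2)).2
      exact hxx (h1.trans h2.symm)
    · intro hT
      obtain ⟨hne, hfil⟩ := Finset.mem_erase.1 hT
      have hnc := (Finset.mem_filter.1 hfil).2
      obtain ⟨ω0, hω0⟩ := Finset.nonempty_of_ne_empty hne
      have hconst : ∀ ω ∈ T, X ω = X ω0 := by
        intro ω hω
        by_contra hx
        exact hnc ⟨Finset.one_lt_card.2 ⟨ω, hω, ω0, hω0, fun h => hx (h ▸ rfl)⟩,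
          ω, hω, ω0, hω0, hx⟩
      refine Finset.mem_biUnion.2 ⟨X ω0, Finset.mem_image_of_mem X (Finset.mem_univ ω0),
        (hmemD _ T).2 ⟨hne, fun ω hω => Finset.mem_filter.2 ⟨Finset.mem_univ ω, hconst ω hω⟩⟩⟩
  -- assemble
  have key : ∑ a ∈ Finset.univ.image X, totalLoss (fib a) P = ∑ T ∈ notC, iL T := by
    have h1 : ∀ a ∈ Finset.univ.image X, totalLoss (fib a) P = ∑ T ∈ D a, iL T := by
      intro a _
      rw [totalLoss_eq_sum_interior, hDdef]
      exact (Finset.sum_erase _ hiL0).symm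
    rw [Finset.sum_congr rfl h1, ← Finset.sum_biUnion hdisj, hbi, Finset.sum_erase _ hiL0]
  have huniv : totalLoss (Finset.univ : Finset Ω) P
      = ∑ T ∈ content X, iL T + ∑ T ∈ notC, iL T := by
    rw [totalLoss_eq_sum_interior, Finset.powerset_univ]
    rw [content, hnotCdef]
    exact (Finset.sum_filter_add_sum_filter_not _ _ _).symm
  rw [stepB, key, huniv]
  ring
end

section
/- The Gács–Körner common information is attained by the finest common coarsening: let X : Ω → α and Y : Ω → β be random variables on a finite probability space, let ≈ be the equivalence relation on Ω generated by the relation {(ω, ω′) : X(ω) = X(ω′) or Y(ω) = Y(ω′)}, and let Z : Ω → Ω/≈ be the quotient map. Then (i) there exist functions f : α → Ω/≈ and g : β → Ω/≈ with Z = f ∘ X and Z = g ∘ Y, and (ii) for any type γ and any functions f′ : α → γ, g′ : β → γ with f′ ∘ X = g′ ∘ Y, one has H(f′ ∘ X) ≤ H(Z). -/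
open Finset
open scoped Classical

lemma probOf_pos {Ω κ : Type*} [Fintype Ω] (P : Ω → ℝ) (hP : ∀ ω, 0 < P ω)
    (Z : Ω → κ) {z : κ} (hz : z ∈ Finset.univ.image Z) : 0 < probOf P Z z := by
  obtain ⟨ω, -, rfl⟩ := Finset.mem_image.mp hz
  unfold probOf
  apply Finset.sum_pos (fun i _ => hP i)
  exact ⟨ω, by simp⟩

lemma probOf_comp {Ω κ γ : Type*} [Fintype Ω] (P : Ω → ℝ) (Z : Ω → κ) (h : κ → γ) (c : γ) :
    probOf P (h ∘ Z) c = ∑ z ∈ (Finset.univ.image Z).filter (fun z => h z = c), probOf P Z z := by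
  have key : ∀ z ∈ (Finset.univ.image Z).filter (fun z => h z = c),
      probOf P Z z = ∑ ω ∈ (Finset.univ.filter (fun ω => (h ∘ Z) ω = c)).filter
        (fun ω => Z ω = z), P ω := by
    intro z hz
    rw [Finset.mem_filter] at hz
    unfold probOf
    congr 1
    ext ω
    simp only [Finset.mem_filter, Finset.mem_univ, true_and, Function.comp]
    constructor
    · intro hω; exact ⟨by rw [hω, hz.2], hω⟩
    · exact fun h => h.2
  have hmaps : ∀ ω ∈ Finset.univ.filter (fun ω => (h ∘ Z) ω = c),
      Z ω ∈ (Finset.univ.image Z).filter (fun z => h z = c) := by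
    intro ω hω
    simp only [Finset.mem_filter, Finset.mem_univ, true_and, Function.comp] at hω ⊢
    exact ⟨Finset.mem_image_of_mem Z (Finset.mem_univ ω), hω⟩
  calc probOf P (h ∘ Z) c
      = ∑ ω ∈ Finset.univ.filter (fun ω => (h ∘ Z) ω = c), P ω := rfl
    _ = ∑ z ∈ (Finset.univ.image Z).filter (fun z => h z = c),
          ∑ ω ∈ (Finset.univ.filter (fun ω => (h ∘ Z) ω = c)).filter (fun ω => Z ω = z), P ω :=
        (Finset.sum_fiberwise_of_maps_to hmaps P).symm
    _ = ∑ z ∈ (Finset.univ.image Z).filter (fun z => h z = c), probOf P Z z :=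
        (Finset.sum_congr rfl key).symm

lemma entropy_comp_le {Ω κ γ : Type*} [Fintype Ω] (P : Ω → ℝ) (hP : ∀ ω, 0 < P ω)
    (Z : Ω → κ) (h : κ → γ) : entropy P (h ∘ Z) ≤ entropy P Z := by
  unfold entropy
  have himg : Finset.univ.image (h ∘ Z) = (Finset.univ.image Z).image h := by
    rw [Finset.image_image]
  rw [himg, ← Finset.sum_fiberwise_of_maps_to (g := h) (t := (Finset.univ.image Z).image h)
    (fun z hz => Finset.mem_image_of_mem h hz)
    (fun z => probOf P Z z * Real.log (1 / probOf P Z z))]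
  apply Finset.sum_le_sum
  intro c hc
  rw [probOf_comp P Z h c]
  set t := (Finset.univ.image Z).filter (fun z => h z = c) with ht
  set q := ∑ z ∈ t, probOf P Z z with hq
  have hpos : ∀ z ∈ t, 0 < probOf P Z z := fun z hz =>
    probOf_pos P hP Z (Finset.mem_filter.mp hz).1
  have hle : ∀ z ∈ t, probOf P Z z ≤ q := by
    intro z hz
    exact Finset.single_le_sum (fun i hi => (hpos i hi).le) hz
  rw [Finset.sum_mul]
  apply Finset.sum_le_sum
  intro z hz
  have hq0 : 0 < q := lt_of_lt_of_le (hpos z hz) (hle z hz)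
  apply mul_le_mul_of_nonneg_left _ (hpos z hz).le
  exact Real.log_le_log (one_div_pos.mpr hq0) (one_div_le_one_div_of_le (hpos z hz) (hle z hz))

universe u

/-- the Gács–Körner common information is attained by the finest common
coarsening.  Let `≈` be the equivalence relation generated by
`{(ω, ω') : X ω = X ω' ∨ Y ω = Y ω'}` and `Z : Ω → Ω/≈` the quotient map.  Then
(i) `Z` factors through both `X` and `Y`, and (ii) any common coarsening
`f' ∘ X = g' ∘ Y` has entropy at most `H(Z)`. -/
theorem gacsKorner_attained {Ω α β : Type*} [Fintype Ω] [Nonempty Ω]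
    (P : Ω → ℝ) (hP : ∀ ω, 0 < P ω) (hsum : ∑ ω, P ω = 1)
    (X : Ω → α) (Y : Ω → β)
    (s : Setoid Ω) (hs : s = Relation.EqvGen.setoid (fun ω ω' => X ω = X ω' ∨ Y ω = Y ω'))
    (Z : Ω → Quotient s) (hZ : Z = Quotient.mk s) :
    ((∃ f : α → Quotient s, Z = f ∘ X) ∧ (∃ g : β → Quotient s, Z = g ∘ Y)) ∧
      ∀ (γ : Type u) (f' : α → γ) (g' : β → γ), f' ∘ X = g' ∘ Y →
        entropy P (f' ∘ X) ≤ entropy P Z := by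
  subst hs; subst hZ
  constructor
  · constructor
    · refine ⟨fun a => if h : ∃ ω, X ω = a then Quotient.mk _ h.choose
        else Quotient.mk _ (Classical.arbitrary Ω), ?_⟩
      funext ω
      have h : ∃ ω', X ω' = X ω := ⟨ω, rfl⟩
      simp only [Function.comp, dif_pos h]
      exact Quotient.sound (Relation.EqvGen.rel _ _ (Or.inl h.choose_spec.symm))
    · refine ⟨fun b => if h : ∃ ω, Y ω = b then Quotient.mk _ h.choose
        else Quotient.mk _ (Classical.arbitrary Ω), ?_⟩
      funext ω
      have h : ∃ ω', Y ω' = Y ω := ⟨ω, rfl⟩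
      simp only [Function.comp, dif_pos h]
      exact Quotient.sound (Relation.EqvGen.rel _ _ (Or.inr h.choose_spec.symm))
  · intro γ f' g' hfg
    have hconst : ∀ a b : Ω,
        (Relation.EqvGen.setoid (fun ω ω' => X ω = X ω' ∨ Y ω = Y ω')).r a b →
        (f' ∘ X) a = (f' ∘ X) b := by
      intro a b hab
      induction hab with
      | rel a b hab =>
        rcases hab with h | h
        · simp only [Function.comp, h]
        · have h1 := congrFun hfg a
          have h2 := congrFun hfg b
          simp only [Function.comp] at h1 h2 ⊢
          rw [h1, h2, h]
      | refl => rfl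
      | symm _ _ _ ih => exact ih.symm
      | trans _ _ _ _ _ ih1 ih2 => exact ih1.trans ih2
    have hW : f' ∘ X = (Quotient.lift (f' ∘ X) hconst) ∘
        (Quotient.mk (Relation.EqvGen.setoid (fun ω ω' => X ω = X ω' ∨ Y ω = Y ω'))) := rfl
    rw [hW]
    exact entropy_comp_le P hP _ _
end
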